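/- A binary phylogenetic network N of cycle-type on X (a single cycle of length |X| with each cycle vertex attached to a distinct leaf) displays every quartet ab|cd for which the pairs {a,b} and {c,d} do not interleave on the cycle, and exhibits no quartets at all when |X| ≥ 4; in particular, for each 4-subset {a,b,c,d} of X, exactly two of the three quartets on {a,b,c,d} are displayed by N. -/

import Mathlib

set_option linter.unusedSectionVars false
set_option linter.unusedVariables false


/- A cycle-type network (an |X|-cycle with a pendant leaf at each cycle vertex)
   displays exactly the non-interleaving quartets and exhibits no quartets. -/

variable {X : Type*} [Fintype X] [DecidableEq X]

/-- The cycle-type network on X determined by the circular ordering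
    f : ZMod m ≃ X: cycle vertices ZMod m joined in a cycle, with the pendant
    leaf f i attached at cycle vertex i. -/
def cycNet (m : ℕ) (f : ZMod m ≃ X) : SimpleGraph (ZMod m ⊕ X) :=
  SimpleGraph.fromRel (fun u v =>
    (∃ i : ZMod m, u = Sum.inl i ∧ v = Sum.inl (i + 1)) ∨
    (∃ i : ZMod m, u = Sum.inl i ∧ v = Sum.inr (f i)))

/-- The pairs {a,b} and {c,d} interleave in the circular ordering given by f. -/
def Interleaves {m : ℕ} (f : ZMod m ≃ X) (a b c d : X) : Prop :=
  ∃ i1 i2 i3 i4 : ZMod m, i1.val < i2.val ∧ i2.val < i3.val ∧ i3.val < i4.val ∧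
    ((({f i1, f i3} : Finset X) = {a, b} ∧ ({f i2, f i4} : Finset X) = {c, d}) ∨
     (({f i1, f i3} : Finset X) = {c, d} ∧ ({f i2, f i4} : Finset X) = {a, b}))

/-- ab|cd is displayed by the cycle-type network: vertex-disjoint paths a–b and
    c–d. -/
def cycDisplays (m : ℕ) (f : ZMod m ≃ X) (a b c d : X) : Prop :=
  ∃ (p : (cycNet m f).Walk (Sum.inr a) (Sum.inr b))
    (q : (cycNet m f).Walk (Sum.inr c) (Sum.inr d)),
    p.IsPath ∧ q.IsPath ∧ ∀ v, v ∈ p.support → v ∉ q.support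

/-- ab|cd is exhibited by the cycle-type network: some cut-edge separates
    {a,b} from {c,d}. -/
def cycExhibits (m : ℕ) (f : ZMod m ≃ X) (a b c d : X) : Prop :=
  ∃ u v : ZMod m ⊕ X, (cycNet m f).Adj u v ∧
    ¬ ((cycNet m f).deleteEdges {s(u, v)}).Connected ∧
    ((cycNet m f).deleteEdges {s(u, v)}).Reachable (Sum.inr a) (Sum.inr b) ∧
    ((cycNet m f).deleteEdges {s(u, v)}).Reachable (Sum.inr c) (Sum.inr d) ∧
    ¬ ((cycNet m f).deleteEdges {s(u, v)}).Reachable (Sum.inr a) (Sum.inr c)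


section helpers
variable {m : ℕ} [NeZero m]

lemma vsub (A B : ZMod m) : (B - A).val = (B.val + m - A.val) % m := by
  have hA : A.val < m := ZMod.val_lt A
  have : B - A = ((B.val + m - A.val : ℕ) : ZMod m) := by
    push_cast [Nat.cast_sub (by omega : A.val ≤ B.val + m)]
    simp [ZMod.natCast_val, ZMod.natCast_self]
  rw [this, ZMod.val_natCast]

lemma vadd (A : ZMod m) (j : ℕ) : (A + (j : ZMod m)).val = (A.val + j) % m := by
  have : A + (j : ZMod m) = ((A.val + j : ℕ) : ZMod m) := by
    rw [Nat.cast_add, ZMod.natCast_val, ZMod.cast_id]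
  rw [this, ZMod.val_natCast]

lemma vinj {A B : ZMod m} (h : A.val = B.val) : A = B := ZMod.val_injective m h

end helpers

section adj
variable {m : ℕ} (f : ZMod m ≃ X)

lemma adj_inl (hm : 4 ≤ m) (i : ZMod m) (w : ZMod m ⊕ X) :
    (cycNet m f).Adj (Sum.inl i) w ↔
      w = Sum.inl (i + 1) ∨ w = Sum.inl (i - 1) ∨ w = Sum.inr (f i) := by
  haveI : NeZero m := ⟨by omega⟩
  have h1 : (1 : ZMod m) ≠ 0 := by
    intro h; have := congrArg ZMod.val h
    rw [ZMod.val_one_eq_one_mod] at this; simp [Nat.mod_eq_of_lt (by omega : 1 < m)] at this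
  constructor
  · rintro ⟨hne, h | h⟩
    · rcases h with ⟨k, hk1, hk2⟩ | ⟨k, hk1, hk2⟩
      · exact Or.inl (by cases hk1; exact hk2)
      · exact Or.inr (Or.inr (by cases hk1; exact hk2))
    · rcases h with ⟨k, hk1, hk2⟩ | ⟨k, hk1, hk2⟩
      · cases hk1; obtain rfl : i = k + 1 := Sum.inl.inj hk2
        exact Or.inr (Or.inl (by rw [Sum.inl.injEq]; ring))
      · simp at hk2
  · rintro (rfl | rfl | rfl)
    · exact ⟨by simp [sub_eq_zero, eq_comm]; intro h; exact h1 (by linear_combination -h), Or.inl (Or.inl ⟨i, rfl, rfl⟩)⟩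
    · refine ⟨by simp [sub_eq_zero]; intro h; exact h1 (by linear_combination h), Or.inr (Or.inl ⟨i - 1, rfl, by rw [Sum.inl.injEq]; ring⟩)⟩
    · exact ⟨by simp, Or.inl (Or.inr ⟨i, rfl, rfl⟩)⟩

lemma adj_inr (x : X) (w : ZMod m ⊕ X) :
    (cycNet m f).Adj (Sum.inr x) w ↔ w = Sum.inl (f.symm x) := by
  constructor
  · rintro ⟨hne, h | h⟩
    · rcases h with ⟨k, hk1, _⟩ | ⟨k, hk1, _⟩ <;> simp at hk1
    · rcases h with ⟨k, hk1, hk2⟩ | ⟨k, hk1, hk2⟩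
      · simp at hk2
      · obtain rfl : x = f k := Sum.inr.inj hk2
        subst hk1; simp
  · rintro rfl
    exact ⟨by simp, Or.inr (Or.inr ⟨f.symm x, rfl, by simp⟩)⟩

lemma adj_step (hm : 4 ≤ m) (i : ZMod m) : (cycNet m f).Adj (Sum.inl i) (Sum.inl (i + 1)) :=
  (adj_inl f hm i _).2 (Or.inl rfl)

lemma adj_pend (hm : 4 ≤ m) (i : ZMod m) : (cycNet m f).Adj (Sum.inl i) (Sum.inr (f i)) :=
  (adj_inl f hm i _).2 (Or.inr (Or.inr rfl))

def arcWalk (hm : 4 ≤ m) : (n : ℕ) → (i : ZMod m) →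
    (cycNet m f).Walk (Sum.inl i) (Sum.inl (i + (n : ZMod m)))
  | 0, i => SimpleGraph.Walk.nil.copy rfl (by simp)
  | n+1, i => ((arcWalk hm n (i + 1)).cons (adj_step f hm i)).copy rfl
      (by rw [Sum.inl.injEq]; push_cast; ring)

lemma arcWalk_support (hm : 4 ≤ m) : ∀ (n : ℕ) (i : ZMod m) (v : ZMod m ⊕ X),
    (v ∈ (arcWalk f hm n i).support ↔ ∃ j : ℕ, j ≤ n ∧ v = Sum.inl (i + (j : ZMod m)))
  | 0, i, v => by
    simp only [arcWalk, SimpleGraph.Walk.support_copy, SimpleGraph.Walk.support_nil]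
    constructor
    · rintro h; simp at h; exact ⟨0, le_refl _, by simp [h]⟩
    · rintro ⟨j, hj, rfl⟩; interval_cases j; simp
  | n+1, i, v => by
    simp only [arcWalk, SimpleGraph.Walk.support_copy, SimpleGraph.Walk.support_cons,
      List.mem_cons, arcWalk_support hm n (i+1) v]
    constructor
    · rintro (rfl | ⟨j, hj, rfl⟩)
      · exact ⟨0, by omega, by simp⟩
      · exact ⟨j+1, by omega, by rw [Sum.inl.injEq]; push_cast; ring⟩
    · rintro ⟨j, hj, rfl⟩
      rcases Nat.eq_zero_or_pos j with rfl | hj0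
      · exact Or.inl (by simp)
      · exact Or.inr ⟨j-1, by omega, by rw [Sum.inl.injEq]; push_cast [Nat.cast_sub hj0]; ring⟩

lemma arcWalk_edges (hm : 4 ≤ m) : ∀ (n : ℕ) (i : ZMod m) (e : Sym2 (ZMod m ⊕ X)),
    e ∈ (arcWalk f hm n i).edges → ∃ j : ℕ, j < n ∧
      e = s(Sum.inl (i + (j : ZMod m)), Sum.inl (i + (j : ZMod m) + 1))
  | 0, i, e => by
    simp [arcWalk]
  | n+1, i, e => by
    simp only [arcWalk, SimpleGraph.Walk.edges_copy, SimpleGraph.Walk.edges_cons, List.mem_cons]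
    rintro (rfl | h)
    · exact ⟨0, by omega, by simp⟩
    · obtain ⟨j, hj, rfl⟩ := arcWalk_edges hm n (i+1) e h
      refine ⟨j+1, by omega, ?_⟩
      have e1 : i + 1 + (j:ZMod m) = i + ((j+1 : ℕ) : ZMod m) := by push_cast; ring
      rw [e1]

lemma arcWalk_isPath (hm : 4 ≤ m) : ∀ (n : ℕ), n < m → ∀ (i : ZMod m),
    (arcWalk f hm n i).IsPath
  | 0, _, i => by simp [arcWalk]
  | n+1, hn, i => by
    haveI : NeZero m := ⟨by omega⟩
    simp only [arcWalk, SimpleGraph.Walk.isPath_copy]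
    rw [SimpleGraph.Walk.cons_isPath_iff]
    refine ⟨arcWalk_isPath hm n (by omega) _, ?_⟩
    rw [arcWalk_support f hm]
    rintro ⟨j, hj, hij⟩
    have hij' : ((1+j : ℕ) : ZMod m) = 0 := by
      have h2 := Sum.inl.inj hij
      push_cast; linear_combination -h2
    have := congrArg ZMod.val hij'
    rw [ZMod.val_natCast, ZMod.val_zero, Nat.mod_eq_of_lt (by omega)] at this
    omega

lemma adj_pend' (hm : 4 ≤ m) (x : X) :
    (cycNet m f).Adj (Sum.inl (f.symm x)) (Sum.inr x) := by
  have := adj_pend f hm (f.symm x); rwa [Equiv.apply_symm_apply] at this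

def leafWalk (hm : 4 ≤ m) (x y : X) :
    (cycNet m f).Walk (Sum.inr x) (Sum.inr y) :=
  SimpleGraph.Walk.cons (adj_pend' f hm x).symm
    (((arcWalk f hm ((f.symm y - f.symm x).val) (f.symm x)).copy rfl
      (by haveI : NeZero m := ⟨by omega⟩
          rw [Sum.inl.injEq, ZMod.natCast_val, ZMod.cast_id]; ring)).append
      (SimpleGraph.Walk.cons (adj_pend' f hm y) SimpleGraph.Walk.nil))

lemma leafWalk_support (hm : 4 ≤ m) (x y : X) (v : ZMod m ⊕ X) :
    v ∈ (leafWalk f hm x y).support ↔ v = Sum.inr x ∨ v = Sum.inr y ∨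
      ∃ j : ℕ, j ≤ (f.symm y - f.symm x).val ∧ v = Sum.inl (f.symm x + (j : ZMod m)) := by
  simp only [leafWalk, SimpleGraph.Walk.support_cons, SimpleGraph.Walk.support_append,
    SimpleGraph.Walk.support_copy, List.mem_cons, List.mem_append]
  rw [arcWalk_support]
  simp only [SimpleGraph.Walk.support_cons, SimpleGraph.Walk.support_nil, List.tail_cons,
    List.mem_singleton]
  constructor
  · rintro (h | h | h)
    · exact Or.inl h
    · exact Or.inr (Or.inr h)
    · exact Or.inr (Or.inl h)
  · rintro (h | h | h)
    · exact Or.inl h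
    · exact Or.inr (Or.inr h)
    · exact Or.inr (Or.inl h)

lemma leafWalk_isPath (hm : 4 ≤ m) (x y : X) (hxy : x ≠ y) :
    (leafWalk f hm x y).IsPath := by
  haveI : NeZero m := ⟨by omega⟩
  rw [SimpleGraph.Walk.isPath_def]
  simp only [leafWalk, SimpleGraph.Walk.support_cons, SimpleGraph.Walk.support_append,
    SimpleGraph.Walk.support_copy, SimpleGraph.Walk.support_nil, List.tail_cons]
  rw [List.nodup_cons]
  constructor
  · rw [List.mem_append]
    rintro (h | h)
    · rw [arcWalk_support] at h; obtain ⟨j, _, h⟩ := h; simp at h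
    · simp at h; exact hxy h
  · rw [List.nodup_append]
    refine ⟨(arcWalk_isPath f hm _ (ZMod.val_lt _) _).support_nodup, List.nodup_singleton _, ?_⟩
    intro v hv
    rw [arcWalk_support] at hv
    obtain ⟨j, _, rfl⟩ := hv
    simp

lemma mod_small {a n : ℕ} (h : a < n) : a % n = a := Nat.mod_eq_of_lt h

lemma mod2 {a n : ℕ} (h1 : n ≤ a) (h2 : a < 2*n) : a % n = a - n := by
  rw [Nat.mod_eq_sub_mod h1, Nat.mod_eq_of_lt (by omega)]

lemma disp_of (hm : 4 ≤ m) (x y z w : X) (hxy : x ≠ y) (hzw : z ≠ w)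
    (hxz : x ≠ z) (hxw : x ≠ w) (hyz : y ≠ z) (hyw : y ≠ w)
    (hsep : ∀ j j' : ℕ, j ≤ (f.symm y - f.symm x).val → j' ≤ (f.symm w - f.symm z).val →
      f.symm x + (j : ZMod m) ≠ f.symm z + (j' : ZMod m)) :
    cycDisplays m f x y z w := by
  refine ⟨leafWalk f hm x y, leafWalk f hm z w,
    leafWalk_isPath f hm x y hxy, leafWalk_isPath f hm z w hzw, ?_⟩
  intro v hv hv'
  rw [leafWalk_support] at hv hv'
  rcases hv with rfl | rfl | ⟨j, hj, rfl⟩ <;>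
    rcases hv' with h | h | ⟨j', hj', h⟩ <;>
      first
        | exact hxz (Sum.inr.inj h)
        | exact hxw (Sum.inr.inj h)
        | exact hyz (Sum.inr.inj h)
        | exact hyw (Sum.inr.inj h)
        | exact hsep j j' hj hj' (Sum.inl.inj h)
        | exact hsep j j' hj hj' h
        | simp at h

lemma disp_adj (hm : 4 ≤ m) (a b c d : X)
    (h1 : (f.symm a).val < (f.symm b).val) (h2 : (f.symm b).val < (f.symm c).val)
    (h3 : (f.symm c).val < (f.symm d).val) :
    cycDisplays m f a b c d := by
  haveI : NeZero m := ⟨by omega⟩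
  have hva : (f.symm a).val < m := ZMod.val_lt _
  have hvb : (f.symm b).val < m := ZMod.val_lt _
  have hvc : (f.symm c).val < m := ZMod.val_lt _
  have hvd : (f.symm d).val < m := ZMod.val_lt _
  have key : ∀ u v : X, (f.symm u).val < (f.symm v).val → u ≠ v := by
    intro u v huv he; subst he; omega
  refine disp_of f hm a b c d (key _ _ h1) (key _ _ h3) (key _ _ (by omega))
    (key _ _ (by omega)) (key _ _ h2) (key _ _ (by omega)) ?_
  intro j j' hj hj' heq
  rw [vsub, mod2 (by omega) (by omega)] at hj hj'
  have hval := congrArg ZMod.val heq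
  rw [vadd, vadd, mod_small (by omega), mod_small (by omega)] at hval
  omega

lemma disp_nested (hm : 4 ≤ m) (a b c d : X)
    (h1 : (f.symm a).val < (f.symm b).val) (h2 : (f.symm b).val < (f.symm c).val)
    (h3 : (f.symm c).val < (f.symm d).val) :
    cycDisplays m f b c d a := by
  haveI : NeZero m := ⟨by omega⟩
  have hva : (f.symm a).val < m := ZMod.val_lt _
  have hvb : (f.symm b).val < m := ZMod.val_lt _
  have hvc : (f.symm c).val < m := ZMod.val_lt _
  have hvd : (f.symm d).val < m := ZMod.val_lt _
  have key : ∀ u v : X, (f.symm u).val < (f.symm v).val → u ≠ v := by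
    intro u v huv he; subst he; omega
  refine disp_of f hm b c d a (key b c h2) (Ne.symm (key a d (by omega)))
    (key b d (by omega)) (Ne.symm (key a b h1)) (key c d h3)
    (Ne.symm (key a c (by omega))) ?_
  intro j j' hj hj' heq
  rw [vsub, mod2 (by omega) (by omega)] at hj
  rw [vsub, mod_small (by omega)] at hj'
  have hval := congrArg ZMod.val heq
  rw [vadd, vadd, mod_small (by omega)] at hval
  rcases lt_or_ge ((f.symm d).val + j') m with hc | hc
  · rw [mod_small (by omega)] at hval; omega
  · rw [mod2 (by omega) (by omega)] at hval; omega

lemma disp_swap1 {x y z w : X} (h : cycDisplays m f x y z w) : cycDisplays m f y x z w := by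
  obtain ⟨p, q, hp, hq, hd⟩ := h
  exact ⟨p.reverse, q, hp.reverse, hq, fun v hv => hd v (by rwa [SimpleGraph.Walk.support_reverse, List.mem_reverse] at hv)⟩

lemma disp_swap2 {x y z w : X} (h : cycDisplays m f x y z w) : cycDisplays m f x y w z := by
  obtain ⟨p, q, hp, hq, hd⟩ := h
  exact ⟨p, q.reverse, hp, hq.reverse, fun v hv hv' => hd v hv (by rwa [SimpleGraph.Walk.support_reverse, List.mem_reverse] at hv')⟩

lemma disp_swapP {x y z w : X} (h : cycDisplays m f x y z w) : cycDisplays m f z w x y := by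
  obtain ⟨p, q, hp, hq, hd⟩ := h
  exact ⟨q, p, hq, hp, fun v hv hv' => hd v hv' hv⟩

lemma int_swap1 {x y z w : X} (h : Interleaves f x y z w) : Interleaves f y x z w := by
  obtain ⟨i1, i2, i3, i4, h1, h2, h3, h4⟩ := h
  exact ⟨i1, i2, i3, i4, h1, h2, h3, by rwa [Finset.pair_comm y x]⟩

lemma int_swap2 {x y z w : X} (h : Interleaves f x y z w) : Interleaves f x y w z := by
  obtain ⟨i1, i2, i3, i4, h1, h2, h3, h4⟩ := h
  exact ⟨i1, i2, i3, i4, h1, h2, h3, by rwa [Finset.pair_comm w z]⟩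

lemma int_swapP {x y z w : X} (h : Interleaves f x y z w) : Interleaves f z w x y := by
  obtain ⟨i1, i2, i3, i4, h1, h2, h3, h4⟩ := h
  exact ⟨i1, i2, i3, i4, h1, h2, h3, h4.symm⟩

section arith
variable {m : ℕ} [NeZero m]

lemma val_one' (hm : 4 ≤ m) : (1 : ZMod m).val = 1 := by
  rw [ZMod.val_one_eq_one_mod, Nat.mod_eq_of_lt (by omega)]

lemma val_sub_one (hm : 4 ≤ m) (z : ZMod m) (hz : z ≠ 0) : (z - 1).val = z.val - 1 := by
  have h0 : z.val ≠ 0 := fun h => hz (by rwa [ZMod.val_eq_zero] at h)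
  have := vsub (1 : ZMod m) z
  rw [val_one' hm] at this
  rw [this, mod2 (by omega) (by have := ZMod.val_lt z; omega)]
  omega

lemma val_neg_one' (hm : 4 ≤ m) : (-1 : ZMod m).val = m - 1 := by
  have : (-1 : ZMod m) = ((m - 1 : ℕ) : ZMod m) := by
    push_cast [Nat.cast_sub (by omega : 1 ≤ m)]
    simp
  rw [this, ZMod.val_natCast, Nat.mod_eq_of_lt (by omega)]

lemma val_add_one (hm : 4 ≤ m) (z : ZMod m) (hz : z ≠ -1) : (z + 1).val = z.val + 1 := by
  have hlt : z.val < m := ZMod.val_lt z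
  have h1 : z.val ≠ m - 1 := by
    intro h
    apply hz
    apply ZMod.val_injective
    rw [val_neg_one' hm, h]
  have := vadd z 1
  push_cast at this
  rw [this, mod_small (by omega)]
end arith

lemma walk_arc (hm : 4 ≤ m) : ∀ (N : ℕ) (i : ZMod m) (b : X)
    (p : (cycNet m f).Walk (Sum.inl i) (Sum.inr b)), p.length ≤ N → p.IsPath →
    (∀ k : ZMod m, (k - i).val ≤ (f.symm b - i).val → Sum.inl k ∈ p.support) ∨
    (∀ k : ZMod m, (k - f.symm b).val ≤ (i - f.symm b).val → Sum.inl k ∈ p.support) := by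
  haveI : NeZero m := ⟨by omega⟩
  intro N
  induction N with
  | zero =>
    intro i b p hlen _
    cases p with
    | @cons _ w _ h q => simp at hlen
  | succ N IH =>
    intro i b p hlen hp
    cases p with
    | @cons _ w _ h q =>
      rw [SimpleGraph.Walk.cons_isPath_iff] at hp
      obtain ⟨hq, hiq⟩ := hp
      rcases (adj_inl f hm i w).1 h with rfl | rfl | rfl
      · -- w = inl (i+1)
        rcases IH (i+1) b q (by simp at hlen; omega) hq with hL | hR
        · left
          intro k hk
          by_cases hki : k = i
          · subst hki; simp [SimpleGraph.Walk.support_cons]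
          · have hBi : f.symm b ≠ i := by
              intro hB
              rw [hB, sub_self, ZMod.val_zero, Nat.le_zero] at hk
              exact hki (by have := (ZMod.val_eq_zero _).1 hk; rwa [sub_eq_zero] at this)
            have hk1 : (k - (i+1)).val ≤ (f.symm b - (i+1)).val := by
              rw [show k - (i+1) = (k - i) - 1 by ring, show f.symm b - (i+1) = (f.symm b - i) - 1 by ring,
                val_sub_one hm _ (by rwa [sub_ne_zero]), val_sub_one hm _ (by rwa [sub_ne_zero])]
              have : (k - i).val ≠ 0 := fun h0 => hki (by have := (ZMod.val_eq_zero _).1 h0; rwa [sub_eq_zero] at this)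
              omega
            rw [SimpleGraph.Walk.support_cons]
            exact List.mem_cons_of_mem _ (hL k hk1)
        · by_cases hBi : f.symm b = i + 1
          · left
            intro k hk
            rw [hBi] at hk
            rw [show i + 1 - i = 1 by ring, val_one' hm] at hk
            rw [SimpleGraph.Walk.support_cons]
            rcases Nat.le_one_iff_eq_zero_or_eq_one.mp hk with h0 | h1
            · have : k = i := by
                have := (ZMod.val_eq_zero _).1 h0; rwa [sub_eq_zero] at this
              subst this; exact List.mem_cons_self
            · have : k = i + 1 := by
                have : k - i = 1 := ZMod.val_injective m (by rw [h1, val_one' hm])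
                linear_combination this
              subst this
              exact List.mem_cons_of_mem _ q.start_mem_support
          · right
            intro k hk
            have hk1 : (k - f.symm b).val ≤ (i + 1 - f.symm b).val := by
              rw [show i + 1 - f.symm b = (i - f.symm b) + 1 by ring,
                val_add_one hm _ (by intro hc; apply hBi; have : i - f.symm b + 1 = 0 := by rw [hc]; ring
                                     have : f.symm b = i + 1 := by linear_combination -this
                                     exact this)]
              omega
            rw [SimpleGraph.Walk.support_cons]
            exact List.mem_cons_of_mem _ (hR k hk1)
      · -- w = inl (i-1)
        rcases IH (i-1) b q (by simp at hlen; omega) hq with hL | hR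
        · by_cases hBi : f.symm b = i - 1
          · right
            intro k hk
            rw [show i - f.symm b = 1 by rw [hBi]; ring, val_one' hm] at hk
            rw [SimpleGraph.Walk.support_cons]
            rcases Nat.le_one_iff_eq_zero_or_eq_one.mp hk with h0 | h1
            · have : k = f.symm b := by
                have := (ZMod.val_eq_zero _).1 h0; rwa [sub_eq_zero] at this
              rw [this, hBi]
              exact List.mem_cons_of_mem _ q.start_mem_support
            · have : k = i := by
                have h2 : k - f.symm b = 1 := ZMod.val_injective m (by rw [h1, val_one' hm])
                have : k = f.symm b + 1 := by linear_combination h2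
                rw [this, hBi]; ring
              subst this; exact List.mem_cons_self
          · left
            intro k hk
            have hki : k - i ≠ -1 := by
              intro hc
              have hBv : (f.symm b - i).val < m := ZMod.val_lt _
              rw [hc, val_neg_one' hm] at hk
              have : (f.symm b - i).val = m - 1 := by omega
              have : f.symm b - i = -1 := by
                apply ZMod.val_injective; rw [this, val_neg_one' hm]
              exact hBi (by linear_combination this)
            have hBne : f.symm b - i ≠ -1 := fun hc => hBi (by linear_combination hc)
            have hk1 : (k - (i-1)).val ≤ (f.symm b - (i-1)).val := by
              rw [show k - (i-1) = (k - i) + 1 by ring, show f.symm b - (i-1) = (f.symm b - i) + 1 by ring,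
                val_add_one hm _ hki, val_add_one hm _ hBne]
              omega
            rw [SimpleGraph.Walk.support_cons]
            exact List.mem_cons_of_mem _ (hL k hk1)
        · right
          intro k hk
          by_cases hki : k = i
          · subst hki; simp [SimpleGraph.Walk.support_cons]
          · have hiB : i - f.symm b ≠ 0 := by
              intro hc
              rw [hc, ZMod.val_zero, Nat.le_zero] at hk
              exact hki (by
                have h2 := (ZMod.val_eq_zero _).1 hk
                have h3 : k = f.symm b := by rwa [sub_eq_zero] at h2
                have h4 : i = f.symm b := by rwa [sub_eq_zero] at hc
                rw [h3, h4])
            have hne : (k - f.symm b).val ≠ (i - f.symm b).val := by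
              intro hc
              exact hki (by
                have := ZMod.val_injective m hc
                have h2 : k = i := by linear_combination this
                exact h2)
            have hk1 : (k - f.symm b).val ≤ (i - 1 - f.symm b).val := by
              rw [show i - 1 - f.symm b = (i - f.symm b) - 1 by ring, val_sub_one hm _ hiB]
              omega
            rw [SimpleGraph.Walk.support_cons]
            exact List.mem_cons_of_mem _ (hR k hk1)
      · -- w = inr (f i)
        cases q with
        | nil =>
          left
          intro k hk
          rw [Equiv.symm_apply_apply, sub_self, ZMod.val_zero, Nat.le_zero] at hk
          have : k = i := by
            have := (ZMod.val_eq_zero _).1 hk; rwa [sub_eq_zero] at this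
          subst this
          exact SimpleGraph.Walk.start_mem_support _
        | @cons _ w' _ h' q' =>
          exfalso
          have hw' : w' = Sum.inl (f.symm (f i)) := (adj_inr f _ _).1 h'
          rw [Equiv.symm_apply_apply] at hw'
          apply hiq
          rw [SimpleGraph.Walk.support_cons]
          exact List.mem_cons_of_mem _ (by rw [← hw']; exact q'.start_mem_support)
    

lemma path_arc (hm : 4 ≤ m) (x y : X) (hxy : x ≠ y)
    (p : (cycNet m f).Walk (Sum.inr x) (Sum.inr y)) (hp : p.IsPath) :
    (∀ k : ZMod m, (k - f.symm x).val ≤ (f.symm y - f.symm x).val → Sum.inl k ∈ p.support) ∨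
    (∀ k : ZMod m, (k - f.symm y).val ≤ (f.symm x - f.symm y).val → Sum.inl k ∈ p.support) := by
  cases p with
  | nil => exact absurd rfl hxy
  | @cons _ w _ h q =>
    have hw : w = Sum.inl (f.symm x) := (adj_inr f _ _).1 h
    subst hw
    rw [SimpleGraph.Walk.cons_isPath_iff] at hp
    rcases walk_arc f hm q.length (f.symm x) y q le_rfl hp.1 with hL | hR
    · left; intro k hk
      rw [SimpleGraph.Walk.support_cons]
      exact List.mem_cons_of_mem _ (hL k hk)
    · right; intro k hk
      rw [SimpleGraph.Walk.support_cons]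
      exact List.mem_cons_of_mem _ (hR k hk)

lemma pair_eq {x y u v : X} (h : ({x, y} : Finset X) = {u, v}) :
    (x = u ∧ y = v) ∨ (x = v ∧ y = u) := by
  have : ({x, y} : Set X) = {u, v} := by
    have := congrArg (fun s : Finset X => (s : Set X)) h
    simpa using this
  exact Set.pair_eq_pair_iff.1 this

lemma not_disp_core (hm : 4 ≤ m) (a b c d : X) (hab : a ≠ b) (hcd : c ≠ d)
    (i1 i2 i3 i4 : ZMod m) (h12 : i1.val < i2.val) (h23 : i2.val < i3.val)
    (h34 : i3.val < i4.val)
    (hab' : ({f i1, f i3} : Finset X) = {a, b}) (hcd' : ({f i2, f i4} : Finset X) = {c, d}) :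
    ¬ cycDisplays m f a b c d := by
  haveI : NeZero m := ⟨by omega⟩
  rintro ⟨p, q, hp, hq, hd⟩
  have hv4 : i4.val < m := ZMod.val_lt _
  have hv3 : i3.val < m := ZMod.val_lt _
  have hv2 : i2.val < m := ZMod.val_lt _
  have hv1 : i1.val < m := ZMod.val_lt _
  -- both inl i2 and inl i4 are in q.support
  have hq24 : Sum.inl i2 ∈ q.support ∧ Sum.inl i4 ∈ q.support := by
    have hCq : Sum.inl (f.symm c) ∈ q.support ∧ Sum.inl (f.symm d) ∈ q.support := by
      rcases path_arc f hm c d hcd q hq with hL | hR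
      · exact ⟨hL _ (by simp), hL _ le_rfl⟩
      · exact ⟨hR _ le_rfl, hR _ (by simp)⟩
    rcases pair_eq hcd' with ⟨hc2, hd4⟩ | ⟨hc2, hd4⟩
    · have e2 : i2 = f.symm c := by rw [← hc2, Equiv.symm_apply_apply]
      have e4 : i4 = f.symm d := by rw [← hd4, Equiv.symm_apply_apply]
      rw [e2, e4]; exact hCq
    · have e2 : i2 = f.symm d := by rw [← hc2, Equiv.symm_apply_apply]
      have e4 : i4 = f.symm c := by rw [← hd4, Equiv.symm_apply_apply]
      rw [e2, e4]; exact ⟨hCq.2, hCq.1⟩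
  -- p.support contains inl i2 or inl i4
  have harith1 : (i2 - i1).val ≤ (i3 - i1).val := by
    rw [vsub, vsub, mod2 (by omega) (by omega), mod2 (by omega) (by omega)]; omega
  have harith2 : (i4 - i3).val ≤ (i1 - i3).val := by
    rw [vsub, vsub, mod2 (by omega) (by omega), mod_small (by omega)]; omega
  have hp24 : Sum.inl i2 ∈ p.support ∨ Sum.inl i4 ∈ p.support := by
    rcases pair_eq hab' with ⟨ha1, hb3⟩ | ⟨ha1, hb3⟩
    · have e1 : f.symm a = i1 := by rw [← ha1, Equiv.symm_apply_apply]
      have e3 : f.symm b = i3 := by rw [← hb3, Equiv.symm_apply_apply]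
      rcases path_arc f hm a b hab p hp with hL | hR
      · exact Or.inl (hL i2 (by rw [e1, e3]; exact harith1))
      · exact Or.inr (hR i4 (by rw [e1, e3]; exact harith2))
    · have e1 : f.symm a = i3 := by rw [← hb3, Equiv.symm_apply_apply]
      have e3 : f.symm b = i1 := by rw [← ha1, Equiv.symm_apply_apply]
      rcases path_arc f hm a b hab p hp with hL | hR
      · exact Or.inr (hL i4 (by rw [e1, e3]; exact harith2))
      · exact Or.inl (hR i2 (by rw [e1, e3]; exact harith1))
  rcases hp24 with h2 | h4
  · exact hd _ h2 hq24.1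
  · exact hd _ h4 hq24.2

lemma not_disp_of_int (hm : 4 ≤ m) (a b c d : X) (hab : a ≠ b) (hcd : c ≠ d)
    (hInt : Interleaves f a b c d) : ¬ cycDisplays m f a b c d := by
  obtain ⟨i1, i2, i3, i4, h12, h23, h34, hcase⟩ := hInt
  rcases hcase with ⟨h1, h2⟩ | ⟨h1, h2⟩
  · exact not_disp_core f hm a b c d hab hcd i1 i2 i3 i4 h12 h23 h34 h1 h2
  · intro hD
    exact not_disp_core f hm c d a b hcd hab i1 i2 i3 i4 h12 h23 h34 h1 h2 (disp_swapP f hD)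

lemma conn_del_cycle (hm : 4 ≤ m) (I : ZMod m) :
    ((cycNet m f).deleteEdges {s(Sum.inl I, Sum.inl (I+1))}).Connected := by
  haveI : NeZero m := ⟨by omega⟩
  rw [SimpleGraph.connected_iff]
  refine ⟨?_, ⟨Sum.inl 0⟩⟩
  have key : ∀ v, ((cycNet m f).deleteEdges {s(Sum.inl I, Sum.inl (I+1))}).Reachable
      (Sum.inl (I+1)) v := by
    have hinl : ∀ k : ZMod m, ((cycNet m f).deleteEdges {s(Sum.inl I, Sum.inl (I+1))}).Reachable
        (Sum.inl (I+1)) (Sum.inl k) := by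
      intro k
      set n := (k - (I+1)).val with hn
      have hend : Sum.inl (I + 1 + (n : ZMod m)) = (Sum.inl k : ZMod m ⊕ X) := by
        rw [hn, ZMod.natCast_val, ZMod.cast_id, Sum.inl.injEq]; ring
      have hnm : n < m := ZMod.val_lt _
      refine ⟨((arcWalk f hm n (I+1)).copy rfl hend).transfer _ ?_⟩
      intro e he
      rw [SimpleGraph.Walk.edges_copy] at he
      rw [SimpleGraph.edgeSet_deleteEdges]
      refine ⟨(arcWalk f hm n (I+1)).edges_subset_edgeSet he, ?_⟩
      obtain ⟨j, hj, rfl⟩ := arcWalk_edges f hm n (I+1) e he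
      intro hcon
      rw [Set.mem_singleton_iff, Sym2.eq_iff] at hcon
      rcases hcon with ⟨h1, -⟩ | ⟨h1, h2⟩
      · have h1' : ((j : ZMod m) + 1) = 0 := by
          have := Sum.inl.inj h1; linear_combination this
        have h1v := congrArg ZMod.val h1'
        rw [show (j : ZMod m) + 1 = ((j + 1 : ℕ) : ZMod m) by push_cast; ring] at h1v
        rw [ZMod.val_natCast, ZMod.val_zero, Nat.mod_eq_of_lt (by omega)] at h1v
        omega
      · have h1' : (j : ZMod m) = 0 := by
          have := Sum.inl.inj h1; linear_combination this
        have hj0 : j = 0 := by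
          have := congrArg ZMod.val h1'
          rwa [ZMod.val_natCast, ZMod.val_zero, Nat.mod_eq_of_lt (by omega)] at this
        subst hj0
        have h2' : ((2 : ℕ) : ZMod m) = 0 := by
          have := Sum.inl.inj h2; push_cast at this ⊢; linear_combination this
        have h2v := congrArg ZMod.val h2'
        rw [ZMod.val_natCast, ZMod.val_zero, Nat.mod_eq_of_lt (by omega)] at h2v
        omega
    intro v
    cases v with
    | inl k => exact hinl k
    | inr x =>
      refine (hinl (f.symm x)).trans (SimpleGraph.Adj.reachable ?_)
      rw [SimpleGraph.deleteEdges_adj]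
      refine ⟨adj_pend' f hm x, ?_⟩
      intro hcon
      rw [Set.mem_singleton_iff, Sym2.eq_iff] at hcon
      rcases hcon with ⟨-, h⟩ | ⟨-, h⟩ <;> simp at h
  intro u v
  exact (key u).symm.trans (key v)

lemma isolated_del_pend (x y : X) (hxy : x ≠ y) :
    ¬ ((cycNet m f).deleteEdges {s(Sum.inl (f.symm x), Sum.inr x)}).Reachable
      (Sum.inr x) (Sum.inr y) := by
  rintro ⟨w⟩
  cases w with
  | nil => exact hxy rfl
  | @cons _ v _ h q =>
    rw [SimpleGraph.deleteEdges_adj] at h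
    obtain ⟨hadj, hne⟩ := h
    have hv : v = Sum.inl (f.symm x) := (adj_inr f _ _).1 hadj
    subst hv
    exact hne (by rw [Sym2.eq_swap]; rfl)

lemma reach_del_pend (hm : 4 ≤ m) (x y z : X) (hyx : y ≠ x) (hzx : z ≠ x) :
    ((cycNet m f).deleteEdges {s(Sum.inl (f.symm x), Sum.inr x)}).Reachable
      (Sum.inr y) (Sum.inr z) := by
  refine ⟨(leafWalk f hm y z).transfer _ ?_⟩
  intro e he
  rw [SimpleGraph.edgeSet_deleteEdges]
  refine ⟨(leafWalk f hm y z).edges_subset_edgeSet he, ?_⟩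
  intro hcon
  rw [Set.mem_singleton_iff] at hcon
  subst hcon
  have : Sum.inr x ∈ (leafWalk f hm y z).support :=
    SimpleGraph.Walk.snd_mem_support_of_mem_edges _ he
  rw [leafWalk_support] at this
  rcases this with h | h | ⟨j, _, h⟩
  · exact hyx (Sum.inr.inj h).symm
  · exact hzx (Sum.inr.inj h).symm
  · simp at h

lemma no_exhibits (hm : 4 ≤ m) (a b c d : X) (hab : a ≠ b) (hcd : c ≠ d) :
    ¬ cycExhibits m f a b c d := by
  rintro ⟨u, v, huv, hconn, hrab, hrcd, hnac⟩
  have pend_case : ∀ (x : X), s(u, v) = s(Sum.inl (f.symm x), Sum.inr x) → False := by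
    intro x hx
    rw [hx] at hrab hrcd hnac
    by_cases hxa : x = a
    · subst hxa; exact isolated_del_pend f x b hab hrab
    · by_cases hxb : x = b
      · subst hxb; exact isolated_del_pend f x a (Ne.symm hab) hrab.symm
      · by_cases hxc : x = c
        · subst hxc; exact isolated_del_pend f x d hcd hrcd
        · by_cases hxd : x = d
          · subst hxd; exact isolated_del_pend f x c (Ne.symm hcd) hrcd.symm
          · exact hnac (reach_del_pend f hm x a c (Ne.symm hxa) (Ne.symm hxc))
  cases u with
  | inr x =>
    have hv : v = Sum.inl (f.symm x) := (adj_inr f _ _).1 huv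
    subst hv
    exact pend_case x (Sym2.eq_swap)
  | inl i =>
    rcases (adj_inl f hm i v).1 huv with rfl | rfl | rfl
    · exact hconn (conn_del_cycle f hm i)
    · have : (s(Sum.inl i, Sum.inl (i-1)) : Sym2 (ZMod m ⊕ X)) = s(Sum.inl (i-1), Sum.inl ((i-1)+1)) := by
        rw [sub_add_cancel, Sym2.eq_swap]
      rw [this] at hconn
      exact hconn (conn_del_cycle f hm (i-1))
    · apply pend_case (f i)
      rw [Equiv.symm_apply_apply]

lemma pair_pos {i j : ZMod m} {x y : X} (h : ({f i, f j} : Finset X) = {x, y}) :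
    (i = f.symm x ∧ j = f.symm y) ∨ (i = f.symm y ∧ j = f.symm x) := by
  rcases pair_eq h with ⟨h1, h2⟩ | ⟨h1, h2⟩
  · exact Or.inl ⟨by rw [← h1, Equiv.symm_apply_apply], by rw [← h2, Equiv.symm_apply_apply]⟩
  · exact Or.inr ⟨by rw [← h1, Equiv.symm_apply_apply], by rw [← h2, Equiv.symm_apply_apply]⟩

lemma master (hm : 4 ≤ m) (x1 x2 x3 x4 : X)
    (h12 : (f.symm x1).val < (f.symm x2).val)
    (h23 : (f.symm x2).val < (f.symm x3).val)
    (h34 : (f.symm x3).val < (f.symm x4).val) :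
    cycDisplays m f x1 x2 x3 x4 ∧ cycDisplays m f x2 x3 x1 x4 ∧
    ¬ cycDisplays m f x1 x3 x2 x4 ∧ Interleaves f x1 x3 x2 x4 ∧
    ¬ Interleaves f x1 x2 x3 x4 ∧ ¬ Interleaves f x2 x3 x1 x4 := by
  haveI : NeZero m := ⟨by omega⟩
  have key : ∀ u v : X, (f.symm u).val < (f.symm v).val → u ≠ v := by
    intro u v huv he; subst he; omega
  have hI : Interleaves f x1 x3 x2 x4 := by
    refine ⟨f.symm x1, f.symm x2, f.symm x3, f.symm x4, h12, h23, h34, Or.inl ⟨?_, ?_⟩⟩ <;>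
      rw [Equiv.apply_symm_apply, Equiv.apply_symm_apply]
  refine ⟨disp_adj f hm x1 x2 x3 x4 h12 h23 h34,
    disp_swap2 f (disp_nested f hm x1 x2 x3 x4 h12 h23 h34),
    not_disp_of_int f hm x1 x3 x2 x4 (key _ _ (by omega)) (key _ _ (by omega)) hI, hI, ?_, ?_⟩
  · rintro ⟨i1, i2, i3, i4, k12, k23, k34, ⟨hx, hy⟩ | ⟨hx, hy⟩⟩ <;>
      rcases pair_pos f hx with ⟨rfl, rfl⟩ | ⟨rfl, rfl⟩ <;>
        rcases pair_pos f hy with ⟨rfl, rfl⟩ | ⟨rfl, rfl⟩ <;> omega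
  · rintro ⟨i1, i2, i3, i4, k12, k23, k34, ⟨hx, hy⟩ | ⟨hx, hy⟩⟩ <;>
      rcases pair_pos f hx with ⟨rfl, rfl⟩ | ⟨rfl, rfl⟩ <;>
        rcases pair_pos f hy with ⟨rfl, rfl⟩ | ⟨rfl, rfl⟩ <;> omega


/-- A cycle-type network on X, |X| ≥ 4, displays exactly the quartets whose
    pairs do not interleave on the cycle, exhibits no quartet, and for each
    4-subset displays exactly two of the three quartets. -/
theorem cycleType_displays_iff_noninterleaving (m : ℕ) (hm : 4 ≤ m)
    (hcard : Fintype.card X = m) (f : ZMod m ≃ X) (a b c d : X)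
    (h : ([a, b, c, d] : List X).Nodup) :
    (cycDisplays m f a b c d ↔ ¬ Interleaves f a b c d) ∧
    ¬ cycExhibits m f a b c d ∧
    ((cycDisplays m f a b c d ∧ cycDisplays m f a c b d ∧
        ¬ cycDisplays m f a d b c) ∨
     (cycDisplays m f a b c d ∧ ¬ cycDisplays m f a c b d ∧
        cycDisplays m f a d b c) ∨
     (¬ cycDisplays m f a b c d ∧ cycDisplays m f a c b d ∧
        cycDisplays m f a d b c)) := by
  haveI : NeZero m := ⟨by omega⟩
  simp only [List.nodup_cons, List.mem_cons, List.mem_singleton, List.nodup_nil,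
    List.not_mem_nil, or_false, and_true, not_or] at h
  obtain ⟨⟨hab, hac, had⟩, ⟨hbc, hbd⟩, hcd, -⟩ := h
  have hNE : ¬ cycExhibits m f a b c d := no_exhibits f hm a b c d hab hcd
  have key : ∀ u v : X, u ≠ v → (f.symm u).val ≠ (f.symm v).val := by
    intro u v huv he
    apply huv
    have h2 := congrArg f (ZMod.val_injective m he)
    rwa [Equiv.apply_symm_apply, Equiv.apply_symm_apply] at h2
  rcases (key a b hab).lt_or_gt with o1 | o1
  · rcases (key a c hac).lt_or_gt with o2 | o2
    · rcases (key a d had).lt_or_gt with o3 | o3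
      · rcases (key b c hbc).lt_or_gt with o4 | o4
        · rcases (key b d hbd).lt_or_gt with o5 | o5
          · rcases (key c d hcd).lt_or_gt with o6 | o6
            · obtain ⟨M1, M2, M3, M4, M5, M6⟩ := master f hm a b c d (by omega) (by omega) (by omega)
              exact ⟨iff_of_true (M1) ((fun hI => M5 (hI))), hNE, Or.inr (Or.inl ⟨M1, (fun hD => M3 (hD)), disp_swapP f (M2)⟩)⟩
            · obtain ⟨M1, M2, M3, M4, M5, M6⟩ := master f hm a b d c (by omega) (by omega) (by omega)
              exact ⟨iff_of_true (disp_swap2 f (M1)) ((fun hI => M5 (int_swap2 f (hI)))), hNE, Or.inl ⟨disp_swap2 f (M1), disp_swapP f (M2), (fun hD => M3 (hD))⟩⟩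
          · rcases (key c d hcd).lt_or_gt with o6 | o6
            · exfalso; omega
            · obtain ⟨M1, M2, M3, M4, M5, M6⟩ := master f hm a d b c (by omega) (by omega) (by omega)
              exact ⟨iff_of_false ((fun hD => M3 (disp_swap2 f (hD)))) (not_not_intro (int_swap2 f (M4))), hNE, Or.inr (Or.inr ⟨(fun hD => M3 (disp_swap2 f (hD))), disp_swap2 f (disp_swapP f (M2)), M1⟩)⟩
        · rcases (key b d hbd).lt_or_gt with o5 | o5
          · rcases (key c d hcd).lt_or_gt with o6 | o6
            · obtain ⟨M1, M2, M3, M4, M5, M6⟩ := master f hm a c b d (by omega) (by omega) (by omega)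
              exact ⟨iff_of_false ((fun hD => M3 (hD))) (not_not_intro (M4)), hNE, Or.inr (Or.inr ⟨(fun hD => M3 (hD)), M1, disp_swap2 f (disp_swapP f (M2))⟩)⟩
            · exfalso; omega
          · rcases (key c d hcd).lt_or_gt with o6 | o6
            · obtain ⟨M1, M2, M3, M4, M5, M6⟩ := master f hm a c d b (by omega) (by omega) (by omega)
              exact ⟨iff_of_true (disp_swapP f (M2)) ((fun hI => M6 (int_swapP f (hI)))), hNE, Or.inl ⟨disp_swapP f (M2), disp_swap2 f (M1), (fun hD => M3 (disp_swap2 f (hD)))⟩⟩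
            · obtain ⟨M1, M2, M3, M4, M5, M6⟩ := master f hm a d c b (by omega) (by omega) (by omega)
              exact ⟨iff_of_true (disp_swap2 f (disp_swapP f (M2))) ((fun hI => M6 (int_swap1 f (int_swapP f (hI))))), hNE, Or.inr (Or.inl ⟨disp_swap2 f (disp_swapP f (M2)), (fun hD => M3 (disp_swap2 f (hD))), disp_swap2 f (M1)⟩)⟩
      · rcases (key b c hbc).lt_or_gt with o4 | o4
        · rcases (key b d hbd).lt_or_gt with o5 | o5
          · rcases (key c d hcd).lt_or_gt with o6 | o6
            · exfalso; omega
            · exfalso; omega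
          · rcases (key c d hcd).lt_or_gt with o6 | o6
            · exfalso; omega
            · obtain ⟨M1, M2, M3, M4, M5, M6⟩ := master f hm d a b c (by omega) (by omega) (by omega)
              exact ⟨iff_of_true (disp_swap2 f (M2)) ((fun hI => M6 (int_swap2 f (hI)))), hNE, Or.inr (Or.inl ⟨disp_swap2 f (M2), (fun hD => M3 (disp_swap1 f (disp_swapP f (hD)))), disp_swap1 f (M1)⟩)⟩
        · rcases (key b d hbd).lt_or_gt with o5 | o5
          · rcases (key c d hcd).lt_or_gt with o6 | o6
            · exfalso; omega
            · exfalso; omega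
          · rcases (key c d hcd).lt_or_gt with o6 | o6
            · exfalso; omega
            · obtain ⟨M1, M2, M3, M4, M5, M6⟩ := master f hm d a c b (by omega) (by omega) (by omega)
              exact ⟨iff_of_false ((fun hD => M3 (disp_swap1 f (disp_swapP f (hD))))) (not_not_intro (int_swap2 f (int_swapP f (M4)))), hNE, Or.inr (Or.inr ⟨(fun hD => M3 (disp_swap1 f (disp_swapP f (hD)))), disp_swap2 f (M2), disp_swap2 f (disp_swap1 f (M1))⟩)⟩
    · rcases (key a d had).lt_or_gt with o3 | o3
      · rcases (key b c hbc).lt_or_gt with o4 | o4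
        · rcases (key b d hbd).lt_or_gt with o5 | o5
          · rcases (key c d hcd).lt_or_gt with o6 | o6
            · exfalso; omega
            · exfalso; omega
          · rcases (key c d hcd).lt_or_gt with o6 | o6
            · exfalso; omega
            · exfalso; omega
        · rcases (key b d hbd).lt_or_gt with o5 | o5
          · rcases (key c d hcd).lt_or_gt with o6 | o6
            · obtain ⟨M1, M2, M3, M4, M5, M6⟩ := master f hm c a b d (by omega) (by omega) (by omega)
              exact ⟨iff_of_true (M2) ((fun hI => M6 (hI))), hNE, Or.inl ⟨M2, disp_swap1 f (M1), (fun hD => M3 (disp_swap1 f (disp_swapP f (hD))))⟩⟩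
            · exfalso; omega
          · rcases (key c d hcd).lt_or_gt with o6 | o6
            · obtain ⟨M1, M2, M3, M4, M5, M6⟩ := master f hm c a d b (by omega) (by omega) (by omega)
              exact ⟨iff_of_false ((fun hD => M3 (disp_swapP f (hD)))) (not_not_intro (int_swapP f (M4))), hNE, Or.inr (Or.inr ⟨(fun hD => M3 (disp_swapP f (hD))), disp_swap2 f (disp_swap1 f (M1)), disp_swap2 f (M2)⟩)⟩
            · exfalso; omega
      · rcases (key b c hbc).lt_or_gt with o4 | o4
        · rcases (key b d hbd).lt_or_gt with o5 | o5
          · rcases (key c d hcd).lt_or_gt with o6 | o6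
            · exfalso; omega
            · exfalso; omega
          · rcases (key c d hcd).lt_or_gt with o6 | o6
            · exfalso; omega
            · exfalso; omega
        · rcases (key b d hbd).lt_or_gt with o5 | o5
          · rcases (key c d hcd).lt_or_gt with o6 | o6
            · exfalso; omega
            · exfalso; omega
          · rcases (key c d hcd).lt_or_gt with o6 | o6
            · obtain ⟨M1, M2, M3, M4, M5, M6⟩ := master f hm c d a b (by omega) (by omega) (by omega)
              exact ⟨iff_of_true (disp_swapP f (M1)) ((fun hI => M5 (int_swapP f (hI)))), hNE, Or.inr (Or.inl ⟨disp_swapP f (M1), (fun hD => M3 (disp_swap2 f (disp_swap1 f (hD)))), disp_swap2 f (disp_swap1 f (M2))⟩)⟩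
            · obtain ⟨M1, M2, M3, M4, M5, M6⟩ := master f hm d c a b (by omega) (by omega) (by omega)
              exact ⟨iff_of_true (disp_swap2 f (disp_swapP f (M1))) ((fun hI => M5 (int_swap1 f (int_swapP f (hI))))), hNE, Or.inl ⟨disp_swap2 f (disp_swapP f (M1)), disp_swap2 f (disp_swap1 f (M2)), (fun hD => M3 (disp_swap2 f (disp_swap1 f (hD))))⟩⟩
  · rcases (key a c hac).lt_or_gt with o2 | o2
    · rcases (key a d had).lt_or_gt with o3 | o3
      · rcases (key b c hbc).lt_or_gt with o4 | o4
        · rcases (key b d hbd).lt_or_gt with o5 | o5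
          · rcases (key c d hcd).lt_or_gt with o6 | o6
            · obtain ⟨M1, M2, M3, M4, M5, M6⟩ := master f hm b a c d (by omega) (by omega) (by omega)
              exact ⟨iff_of_true (disp_swap1 f (M1)) ((fun hI => M5 (int_swap1 f (hI)))), hNE, Or.inl ⟨disp_swap1 f (M1), M2, (fun hD => M3 (disp_swapP f (hD)))⟩⟩
            · obtain ⟨M1, M2, M3, M4, M5, M6⟩ := master f hm b a d c (by omega) (by omega) (by omega)
              exact ⟨iff_of_true (disp_swap2 f (disp_swap1 f (M1))) ((fun hI => M5 (int_swap2 f (int_swap1 f (hI))))), hNE, Or.inr (Or.inl ⟨disp_swap2 f (disp_swap1 f (M1)), (fun hD => M3 (disp_swapP f (hD))), M2⟩)⟩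
          · rcases (key c d hcd).lt_or_gt with o6 | o6
            · exfalso; omega
            · exfalso; omega
        · rcases (key b d hbd).lt_or_gt with o5 | o5
          · rcases (key c d hcd).lt_or_gt with o6 | o6
            · exfalso; omega
            · exfalso; omega
          · rcases (key c d hcd).lt_or_gt with o6 | o6
            · exfalso; omega
            · exfalso; omega
      · rcases (key b c hbc).lt_or_gt with o4 | o4
        · rcases (key b d hbd).lt_or_gt with o5 | o5
          · rcases (key c d hcd).lt_or_gt with o6 | o6
            · exfalso; omega
            · obtain ⟨M1, M2, M3, M4, M5, M6⟩ := master f hm b d a c (by omega) (by omega) (by omega)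
              exact ⟨iff_of_false ((fun hD => M3 (disp_swap2 f (disp_swap1 f (hD))))) (not_not_intro (int_swap2 f (int_swap1 f (M4)))), hNE, Or.inr (Or.inr ⟨(fun hD => M3 (disp_swap2 f (disp_swap1 f (hD)))), disp_swapP f (M1), disp_swap1 f (M2)⟩)⟩
          · rcases (key c d hcd).lt_or_gt with o6 | o6
            · exfalso; omega
            · obtain ⟨M1, M2, M3, M4, M5, M6⟩ := master f hm d b a c (by omega) (by omega) (by omega)
              exact ⟨iff_of_true (disp_swap2 f (disp_swap1 f (M2))) ((fun hI => M6 (int_swap2 f (int_swap1 f (hI))))), hNE, Or.inl ⟨disp_swap2 f (disp_swap1 f (M2)), disp_swap2 f (disp_swapP f (M1)), (fun hD => M3 (disp_swap1 f (hD)))⟩⟩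
        · rcases (key b d hbd).lt_or_gt with o5 | o5
          · rcases (key c d hcd).lt_or_gt with o6 | o6
            · exfalso; omega
            · exfalso; omega
          · rcases (key c d hcd).lt_or_gt with o6 | o6
            · exfalso; omega
            · exfalso; omega
    · rcases (key a d had).lt_or_gt with o3 | o3
      · rcases (key b c hbc).lt_or_gt with o4 | o4
        · rcases (key b d hbd).lt_or_gt with o5 | o5
          · rcases (key c d hcd).lt_or_gt with o6 | o6
            · obtain ⟨M1, M2, M3, M4, M5, M6⟩ := master f hm b c a d (by omega) (by omega) (by omega)
              exact ⟨iff_of_false ((fun hD => M3 (disp_swap1 f (hD)))) (not_not_intro (int_swap1 f (M4))), hNE, Or.inr (Or.inr ⟨(fun hD => M3 (disp_swap1 f (hD))), disp_swap1 f (M2), disp_swapP f (M1)⟩)⟩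
            · exfalso; omega
          · rcases (key c d hcd).lt_or_gt with o6 | o6
            · exfalso; omega
            · exfalso; omega
        · rcases (key b d hbd).lt_or_gt with o5 | o5
          · rcases (key c d hcd).lt_or_gt with o6 | o6
            · obtain ⟨M1, M2, M3, M4, M5, M6⟩ := master f hm c b a d (by omega) (by omega) (by omega)
              exact ⟨iff_of_true (disp_swap1 f (M2)) ((fun hI => M6 (int_swap1 f (hI)))), hNE, Or.inr (Or.inl ⟨disp_swap1 f (M2), (fun hD => M3 (disp_swap1 f (hD))), disp_swap2 f (disp_swapP f (M1))⟩)⟩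
            · exfalso; omega
          · rcases (key c d hcd).lt_or_gt with o6 | o6
            · exfalso; omega
            · exfalso; omega
      · rcases (key b c hbc).lt_or_gt with o4 | o4
        · rcases (key b d hbd).lt_or_gt with o5 | o5
          · rcases (key c d hcd).lt_or_gt with o6 | o6
            · obtain ⟨M1, M2, M3, M4, M5, M6⟩ := master f hm b c d a (by omega) (by omega) (by omega)
              exact ⟨iff_of_true (disp_swap1 f (disp_swapP f (M2))) ((fun hI => M6 (int_swap2 f (int_swapP f (hI))))), hNE, Or.inr (Or.inl ⟨disp_swap1 f (disp_swapP f (M2)), (fun hD => M3 (disp_swap2 f (disp_swapP f (hD)))), disp_swap1 f (disp_swapP f (M1))⟩)⟩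
            · obtain ⟨M1, M2, M3, M4, M5, M6⟩ := master f hm b d c a (by omega) (by omega) (by omega)
              exact ⟨iff_of_true (disp_swap2 f (disp_swap1 f (disp_swapP f (M2)))) ((fun hI => M6 (int_swap2 f (int_swap1 f (int_swapP f (hI)))))), hNE, Or.inl ⟨disp_swap2 f (disp_swap1 f (disp_swapP f (M2))), disp_swap1 f (disp_swapP f (M1)), (fun hD => M3 (disp_swap2 f (disp_swapP f (hD))))⟩⟩
          · rcases (key c d hcd).lt_or_gt with o6 | o6
            · exfalso; omega
            · obtain ⟨M1, M2, M3, M4, M5, M6⟩ := master f hm d b c a (by omega) (by omega) (by omega)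
              exact ⟨iff_of_false ((fun hD => M3 (disp_swap2 f (disp_swap1 f (disp_swapP f (hD)))))) (not_not_intro (int_swap2 f (int_swap1 f (int_swapP f (M4))))), hNE, Or.inr (Or.inr ⟨(fun hD => M3 (disp_swap2 f (disp_swap1 f (disp_swapP f (hD))))), disp_swap2 f (disp_swap1 f (disp_swapP f (M1))), disp_swap1 f (disp_swapP f (M2))⟩)⟩
        · rcases (key b d hbd).lt_or_gt with o5 | o5
          · rcases (key c d hcd).lt_or_gt with o6 | o6
            · obtain ⟨M1, M2, M3, M4, M5, M6⟩ := master f hm c b d a (by omega) (by omega) (by omega)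
              exact ⟨iff_of_false ((fun hD => M3 (disp_swap2 f (disp_swapP f (hD))))) (not_not_intro (int_swap1 f (int_swapP f (M4)))), hNE, Or.inr (Or.inr ⟨(fun hD => M3 (disp_swap2 f (disp_swapP f (hD)))), disp_swap1 f (disp_swapP f (M2)), disp_swap2 f (disp_swap1 f (disp_swapP f (M1)))⟩)⟩
            · exfalso; omega
          · rcases (key c d hcd).lt_or_gt with o6 | o6
            · obtain ⟨M1, M2, M3, M4, M5, M6⟩ := master f hm c d b a (by omega) (by omega) (by omega)
              exact ⟨iff_of_true (disp_swap1 f (disp_swapP f (M1))) ((fun hI => M5 (int_swap2 f (int_swapP f (hI))))), hNE, Or.inl ⟨disp_swap1 f (disp_swapP f (M1)), disp_swap2 f (disp_swap1 f (disp_swapP f (M2))), (fun hD => M3 (disp_swap2 f (disp_swap1 f (disp_swapP f (hD)))))⟩⟩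
            · obtain ⟨M1, M2, M3, M4, M5, M6⟩ := master f hm d c b a (by omega) (by omega) (by omega)
              exact ⟨iff_of_true (disp_swap2 f (disp_swap1 f (disp_swapP f (M1)))) ((fun hI => M5 (int_swap2 f (int_swap1 f (int_swapP f (hI)))))), hNE, Or.inr (Or.inl ⟨disp_swap2 f (disp_swap1 f (disp_swapP f (M1))), (fun hD => M3 (disp_swap2 f (disp_swap1 f (disp_swapP f (hD))))), disp_swap2 f (disp_swap1 f (disp_swapP f (M2)))⟩)⟩
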